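/- Let V be a real Hilbert space, a : V × V → ℝ a continuous symmetric bilinear form that is T-coercive (there exists bounded linear T : V → V and α > 0 with |a(v,Tv)| ≥ α‖v‖² for all v). Then for every continuous linear functional f on V there exists a unique u ∈ V such that a(u,v) = f(v) for all v ∈ V. -/

import Mathlib

/-- Well-posedness via T-coercivity: a continuous symmetric T-coercive bilinear form on a
real Hilbert space induces a well-posed variational problem. -/
theorem stmt_1 {V : Type*} [NormedAddCommGroup V] [InnerProductSpace ℝ V] [CompleteSpace V]
    (a : V →L[ℝ] V →L[ℝ] ℝ) (hsym : ∀ u v : V, a u v = a v u)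
    (T : V →L[ℝ] V) (α : ℝ) (hα : 0 < α)
    (hT : ∀ v : V, α * ‖v‖ ^ 2 ≤ |a v (T v)|) :
    ∀ f : V →L[ℝ] ℝ, ∃! u : V, ∀ v : V, a u v = f v := by
  intro f
  -- a vanishing against everything forces zero
  have hzero : ∀ u : V, (∀ v : V, a u v = 0) → u = 0 := by
    intro u hu
    have h := hT u
    rw [hu (T u), abs_zero] at h
    have h2 : ‖u‖ ^ 2 = 0 := le_antisymm (by nlinarith) (sq_nonneg _)
    exact norm_eq_zero.mp (pow_eq_zero_iff two_ne_zero |>.mp h2)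
  -- the Riesz operator
  set A : V →L[ℝ] V :=
    ((InnerProductSpace.toDual ℝ V).symm.toContinuousLinearEquiv.toContinuousLinearMap).comp a
    with hAdef
  have hA : ∀ v w : V, (inner ℝ (A v) w : ℝ) = a v w := by
    intro v w
    simpa [hAdef] using InnerProductSpace.toDual_symm_apply (𝕜 := ℝ) (E := V)
      (y := (a v : V →L[ℝ] ℝ)) (x := w)
  -- lower bound
  have hbound : ∀ v : V, ‖v‖ ≤ ((‖T‖ + 1) / α) * ‖A v‖ := by
    intro v
    have h1 : α * ‖v‖ ^ 2 ≤ ‖A v‖ * ‖T v‖ := by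
      calc α * ‖v‖ ^ 2 ≤ |a v (T v)| := hT v
        _ = |(inner ℝ (A v) (T v) : ℝ)| := by rw [hA]
        _ ≤ ‖A v‖ * ‖T v‖ := abs_real_inner_le_norm _ _
    have h2 : ‖T v‖ ≤ ‖T‖ * ‖v‖ := T.le_opNorm v
    have hTn : (0:ℝ) ≤ ‖T‖ := norm_nonneg T
    have hAn : (0:ℝ) ≤ ‖A v‖ := norm_nonneg _
    rcases eq_or_ne v 0 with rfl | hv
    · simp
    · have hvn : 0 < ‖v‖ := norm_pos_iff.mpr hv
      rw [div_mul_eq_mul_div, le_div_iff₀ hα]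
      nlinarith
  have hK : (0:ℝ) ≤ (‖T‖ + 1) / α := by positivity
  have hanti : AntilipschitzWith ⟨(‖T‖ + 1) / α, hK⟩ A :=
    AddMonoidHomClass.antilipschitz_of_bound A hbound
  -- range of A is closed
  have hclosed : IsClosed (LinearMap.range (A : V →ₗ[ℝ] V) : Set V) := by
    rw [LinearMap.coe_range, ContinuousLinearMap.coe_coe]
    exact hanti.isClosed_range A.uniformContinuous
  haveI : CompleteSpace (LinearMap.range (A : V →ₗ[ℝ] V)) := hclosed.completeSpace_coe
  -- orthogonal complement of range is trivial
  have horth : (LinearMap.range (A : V →ₗ[ℝ] V))ᗮ = ⊥ := by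
    rw [Submodule.eq_bot_iff]
    intro w hw
    apply hzero
    intro v
    have h1 : (inner ℝ (A v) w : ℝ) = 0 :=
      (Submodule.mem_orthogonal _ _).mp hw (A v) (LinearMap.mem_range_self _ v)
    rw [hA] at h1
    rw [hsym]; exact h1
  have hrange : LinearMap.range (A : V →ₗ[ℝ] V) = ⊤ := Submodule.orthogonal_eq_bot_iff.mp horth
  -- existence
  obtain ⟨u, hu⟩ := LinearMap.range_eq_top.mp hrange ((InnerProductSpace.toDual ℝ V).symm f)
  have hfv : ∀ v : V, a u v = f v := by
    intro v
    rw [← hA, show A u = _ from hu]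
    exact InnerProductSpace.toDual_symm_apply (𝕜 := ℝ) (E := V) (y := f) (x := v)
  refine ⟨u, hfv, ?_⟩
  intro u' hu'
  have : ∀ v : V, a (u' - u) v = 0 := by
    intro v
    have := hu' v
    have h2 := hfv v
    simp [map_sub, ContinuousLinearMap.sub_apply]
    linarith
  have := hzero _ this
  exact sub_eq_zero.mp this
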